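/- (Theorem 1, preferred semantics.) For every valuation v ⊆ 𝒫: v ⊨ Preferred if and only if E(v) is a preferred extension of the AF (A_v, R_v), i.e. a ⊆-maximal complete extension of (A_v, R_v). Moreover, for every AF (A,R), the set of preferred extensions of (A,R) equals {E(v) : (v_(A,R), v) ∈ ‖makeExt^pr‖}, where makeExt^pr = vary(IN_U); Preferred?. -/

import Mathlib

noncomputable section

namespace DLPA

/-- Propositional variables: awareness, acceptance, attack, auxiliary acceptance
copies, plus countably many further auxiliary variables. -/
inductive PVar (U : Type) : Type
  | aw : U → PVar U
  | inn : U → PVar U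
  | att : U → U → PVar U
  | inn' : U → PVar U
  | aux : Nat → PVar U

-- DL-PA formulas and programs, by mutual recursion.
mutual
  inductive Form (U : Type) : Type
    | var : PVar U → Form U
    | neg : Form U → Form U
    | conj : Form U → Form U → Form U
    | box : Prog U → Form U → Form U
  inductive Prog (U : Type) : Type
    | add : PVar U → Prog U           -- +p
    | rem : PVar U → Prog U           -- −p
    | test : Form U → Prog U          -- φ?
    | seq : Prog U → Prog U → Prog U
    | choice : Prog U → Prog U → Prog U
    | conv : Prog U → Prog U
end

variable {U : Type}

/-- A valuation is a set of propositional variables. -/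
abbrev Val (U : Type) := Set (PVar U)

-- Satisfaction of formulas and interpretation of programs, by mutual recursion.
mutual
  def Sat : Val U → Form U → Prop
    | v, Form.var p => p ∈ v
    | v, Form.neg φ => ¬ Sat v φ
    | v, Form.conj φ ψ => Sat v φ ∧ Sat v ψ
    | v, Form.box π φ => ∀ w, Rel π v w → Sat w φ
  def Rel : Prog U → Val U → Val U → Prop
    | Prog.add p, v, w => w = v ∪ {p}
    | Prog.rem p, v, w => w = v \ {p}
    | Prog.test φ, v, w => w = v ∧ Sat v φ
    | Prog.seq π₁ π₂, v, w => ∃ u, Rel π₁ v u ∧ Rel π₂ u w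
    | Prog.choice π₁ π₂, v, w => Rel π₁ v w ∨ Rel π₂ v w
    | Prog.conv π, v, w => Rel π w v
end

def Form.falsum : Form U := Form.conj (Form.var (PVar.aux 0)) (Form.neg (Form.var (PVar.aux 0)))
def Form.top : Form U := Form.neg Form.falsum
def Form.impl (φ ψ : Form U) : Form U := Form.neg (Form.conj φ (Form.neg ψ))
def Form.disj (φ ψ : Form U) : Form U := Form.neg (Form.conj (Form.neg φ) (Form.neg ψ))
def Form.equiv (φ ψ : Form U) : Form U := Form.conj (Form.impl φ ψ) (Form.impl ψ φ)
def Form.dia (π : Prog U) (φ : Form U) : Form U := Form.neg (Form.box π (Form.neg φ))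
def Prog.skip : Prog U := Prog.test Form.top

/-- Sequential composition of a list of programs (`skip` for the empty list). -/
def seqList {β : Type} (f : β → Prog U) : List β → Prog U
  | [] => Prog.skip
  | p :: ps => Prog.seq (f p) (seqList f ps)

/-- Nondeterministic composition of a list of programs (`skip` for the empty list). -/
def unionList {β : Type} (f : β → Prog U) : List β → Prog U
  | [] => Prog.skip
  | [p] => f p
  | p :: ps => Prog.choice (f p) (unionList f ps)

def mkTrueOne (L : List (PVar U)) : Prog U :=
  unionList (fun p => Prog.seq (Prog.test (Form.neg (Form.var p))) (Prog.add p)) L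
def mkFalseOne (L : List (PVar U)) : Prog U :=
  unionList (fun p => Prog.seq (Prog.test (Form.var p)) (Prog.rem p)) L
def mkTrueSome (L : List (PVar U)) : Prog U :=
  seqList (fun p => Prog.choice (Prog.add p) Prog.skip) L
def mkFalseSome (L : List (PVar U)) : Prog U :=
  seqList (fun p => Prog.choice (Prog.rem p) Prog.skip) L
def vary (L : List (PVar U)) : Prog U :=
  seqList (fun p => Prog.choice (Prog.add p) (Prog.rem p)) L
/-- dis(ATT_R): for each pair (x,y) in the list, make true att_{x,y} or att_{y,x}. -/
def dis (L : List (U × U)) : Prog U :=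
  seqList (fun q => Prog.choice (Prog.add (PVar.att q.1 q.2)) (Prog.add (PVar.att q.2 q.1))) L

def conjList : List (Form U) → Form U
  | [] => Form.top
  | φ :: φs => Form.conj φ (conjList φs)
def disjList : List (Form U) → Form U
  | [] => Form.falsum
  | φ :: φs => Form.disj φ (disjList φs)

/-- The elements of a finite universe in a fixed order. -/
def enum (U : Type) [Fintype U] : List U := Finset.univ.toList

def bigConj [Fintype U] (f : U → Form U) : Form U := conjList ((enum U).map f)
def bigDisj [Fintype U] (f : U → Form U) : Form U := disjList ((enum U).map f)

def INlist (U : Type) [Fintype U] : List (PVar U) := (enum U).map PVar.inn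

/-- copy(IN_U) copies the value of in_x to in'_x, for every x ∈ U. -/
def copyIN (U : Type) [Fintype U] : Prog U :=
  seqList (fun x => Prog.choice
      (Prog.seq (Prog.test (Form.var (PVar.inn x))) (Prog.add (PVar.inn' x)))
      (Prog.seq (Prog.test (Form.neg (Form.var (PVar.inn x)))) (Prog.rem (PVar.inn' x))))
    (enum U)

def Well (U : Type) [Fintype U] : Form U :=
  bigConj (fun x => Form.impl (Form.var (PVar.inn x)) (Form.var (PVar.aw x)))

def ConFree (U : Type) [Fintype U] : Form U :=
  Form.conj (Well U) (bigConj fun x => bigConj fun y =>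
    Form.neg (Form.conj (Form.var (PVar.inn x))
      (Form.conj (Form.var (PVar.inn y)) (Form.var (PVar.att x y)))))

def AdmissibleF (U : Type) [Fintype U] : Form U :=
  Form.conj (ConFree U) (bigConj fun x => Form.impl (Form.var (PVar.inn x))
    (bigConj fun y => Form.impl (Form.conj (Form.var (PVar.aw y)) (Form.var (PVar.att y x)))
      (bigDisj fun z => Form.conj (Form.var (PVar.inn z)) (Form.var (PVar.att z y)))))

def StableF (U : Type) [Fintype U] : Form U :=
  Form.conj (Well U) (bigConj fun x => Form.impl (Form.var (PVar.aw x))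
    (Form.equiv (Form.var (PVar.inn x))
      (Form.neg (bigDisj fun y => Form.conj (Form.var (PVar.inn y)) (Form.var (PVar.att y x))))))

def CompleteF (U : Type) [Fintype U] : Form U :=
  Form.conj (ConFree U) (bigConj fun x => Form.equiv (Form.var (PVar.inn x))
    (bigConj fun y => Form.impl (Form.conj (Form.var (PVar.aw y)) (Form.var (PVar.att y x)))
      (bigDisj fun z => Form.conj (Form.var (PVar.inn z)) (Form.var (PVar.att z y)))))

def GroundedF (U : Type) [Fintype U] : Form U :=
  Form.conj (CompleteF U)
    (Form.box (Prog.seq (mkFalseOne (INlist U)) (mkFalseSome (INlist U))) (Form.neg (CompleteF U)))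

def PreferredF (U : Type) [Fintype U] : Form U :=
  Form.conj (AdmissibleF U)
    (Form.box (Prog.seq (mkTrueOne (INlist U)) (mkTrueSome (INlist U))) (Form.neg (AdmissibleF U)))

def NaiveF (U : Type) [Fintype U] : Form U :=
  Form.conj (ConFree U) (Form.box (mkTrueOne (INlist U)) (Form.neg (ConFree U)))

def IncludedInCp (U : Type) [Fintype U] : Form U :=
  bigConj fun x => Form.impl
    (Form.disj (Form.var (PVar.inn x)) (Form.conj (Form.var (PVar.aw x))
      (bigDisj fun y => Form.conj (Form.var (PVar.inn y)) (Form.var (PVar.att y x)))))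
    (Form.disj (Form.var (PVar.inn' x)) (Form.conj (Form.var (PVar.aw x))
      (bigDisj fun y => Form.conj (Form.var (PVar.inn' y)) (Form.var (PVar.att y x)))))

def IncludesCp (U : Type) [Fintype U] : Form U :=
  bigConj fun x => Form.impl
    (Form.disj (Form.var (PVar.inn' x)) (Form.conj (Form.var (PVar.aw x))
      (bigDisj fun y => Form.conj (Form.var (PVar.inn' y)) (Form.var (PVar.att y x)))))
    (Form.disj (Form.var (PVar.inn x)) (Form.conj (Form.var (PVar.aw x))
      (bigDisj fun y => Form.conj (Form.var (PVar.inn y)) (Form.var (PVar.att y x)))))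

/-- makeExt^σ = vary(IN_U); φ_σ? -/
def makeExt (U : Type) [Fintype U] (φ : Form U) : Prog U :=
  Prog.seq (vary (INlist U)) (Prog.test φ)

def SemiStableF (U : Type) [Fintype U] : Form U :=
  Form.conj (CompleteF U)
    (Form.box (Prog.seq (copyIN U) (makeExt U (CompleteF U)))
      (Form.impl (IncludesCp U) (IncludedInCp U)))

/-- A_v -/
def Av (v : Val U) : Set U := {x | PVar.aw x ∈ v}
/-- R_v -/
def Rv (v : Val U) : Set (U × U) := {q | q.1 ∈ Av v ∧ q.2 ∈ Av v ∧ PVar.att q.1 q.2 ∈ v}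
/-- E(v) -/
def Ev (v : Val U) : Set U := {x | PVar.inn x ∈ v}
/-- {x ∈ U : in'_x ∈ v} -/
def Cv (v : Val U) : Set U := {x | PVar.inn' x ∈ v}
/-- v_(A,R) = AW_A ∪ ATT_R -/
def valOf (A : Set U) (R : Set (U × U)) : Val U :=
  (PVar.aw '' A) ∪ ((fun q : U × U => PVar.att q.1 q.2) '' R)

/-- E⁺, the set of arguments of A attacked by E in (A,R). -/
def attacked (A : Set U) (R : Set (U × U)) (E : Set U) : Set U :=
  {x ∈ A | ∃ y ∈ E, (y, x) ∈ R}
/-- E⊕ = E ∪ E⁺, the range of E. -/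
def rangeOf (A : Set U) (R : Set (U × U)) (E : Set U) : Set U :=
  E ∪ attacked A R E

def IsConflictFree (A : Set U) (R : Set (U × U)) (E : Set U) : Prop :=
  E ⊆ A ∧ E ∩ attacked A R E = ∅
def Defends (A : Set U) (R : Set (U × U)) (E : Set U) (a : U) : Prop :=
  ∀ x ∈ A, (x, a) ∈ R → x ∈ attacked A R E
def IsAdmissibleExt (A : Set U) (R : Set (U × U)) (E : Set U) : Prop :=
  IsConflictFree A R E ∧ ∀ a ∈ E, Defends A R E a
def IsStableExt (A : Set U) (R : Set (U × U)) (E : Set U) : Prop :=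
  IsConflictFree A R E ∧ A \ E ⊆ attacked A R E
def IsCompleteExt (A : Set U) (R : Set (U × U)) (E : Set U) : Prop :=
  IsConflictFree A R E ∧ E = {a ∈ A | Defends A R E a}
def IsGroundedExt (A : Set U) (R : Set (U × U)) (E : Set U) : Prop :=
  IsCompleteExt A R E ∧ ∀ E', IsCompleteExt A R E' → E' ⊆ E → E' = E
def IsPreferredExt (A : Set U) (R : Set (U × U)) (E : Set U) : Prop :=
  IsCompleteExt A R E ∧ ∀ E', IsCompleteExt A R E' → E ⊆ E' → E' = E
def IsNaiveExt (A : Set U) (R : Set (U × U)) (E : Set U) : Prop :=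
  IsConflictFree A R E ∧ ∀ E', IsConflictFree A R E' → E ⊆ E' → E' = E
def IsSemiStableExt (A : Set U) (R : Set (U × U)) (E : Set U) : Prop :=
  IsCompleteExt A R E ∧ ¬ ∃ E', IsCompleteExt A R E' ∧ rangeOf A R E ⊂ rangeOf A R E'

end DLPA

end


namespace DLPA
section ThmAux
variable {U : Type}

-- Basic satisfaction lemmas
@[simp] lemma sat_var {v : Val U} {p} : Sat v (Form.var p) ↔ p ∈ v := by simp [Sat]
@[simp] lemma sat_neg {v : Val U} {φ} : Sat v (Form.neg φ) ↔ ¬ Sat v φ := by simp [Sat]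
@[simp] lemma sat_conj {v : Val U} {φ ψ} : Sat v (Form.conj φ ψ) ↔ Sat v φ ∧ Sat v ψ := by
  simp [Sat]
@[simp] lemma sat_box {v : Val U} {π φ} :
    Sat v (Form.box π φ) ↔ ∀ w, Rel π v w → Sat w φ := by simp [Sat]
@[simp] lemma sat_falsum {v : Val U} : ¬ Sat v Form.falsum := by simp [Form.falsum]
@[simp] lemma sat_top {v : Val U} : Sat v Form.top := by simp [Form.top]
@[simp] lemma sat_impl {v : Val U} {φ ψ} :
    Sat v (Form.impl φ ψ) ↔ (Sat v φ → Sat v ψ) := by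
  simp only [Form.impl, sat_neg, sat_conj]; tauto
@[simp] lemma sat_disj {v : Val U} {φ ψ} :
    Sat v (Form.disj φ ψ) ↔ (Sat v φ ∨ Sat v ψ) := by simp [Form.disj]; tauto

@[simp] lemma rel_add {v w : Val U} {p} : Rel (Prog.add p) v w ↔ w = v ∪ {p} := by simp [Rel]
@[simp] lemma rel_rem {v w : Val U} {p} : Rel (Prog.rem p) v w ↔ w = v \ {p} := by simp [Rel]
@[simp] lemma rel_test {v w : Val U} {φ} :
    Rel (Prog.test φ) v w ↔ w = v ∧ Sat v φ := by simp [Rel]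
@[simp] lemma rel_seq {v w : Val U} {π₁ π₂} :
    Rel (Prog.seq π₁ π₂) v w ↔ ∃ u, Rel π₁ v u ∧ Rel π₂ u w := by simp [Rel]
@[simp] lemma rel_choice {v w : Val U} {π₁ π₂} :
    Rel (Prog.choice π₁ π₂) v w ↔ Rel π₁ v w ∨ Rel π₂ v w := by simp [Rel]
@[simp] lemma rel_skip {v w : Val U} : Rel Prog.skip v w ↔ w = v := by simp [Prog.skip]

-- Big conjunction / disjunction
lemma sat_conjList {v : Val U} {L : List (Form U)} :
    Sat v (conjList L) ↔ ∀ φ ∈ L, Sat v φ := by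
  induction L with
  | nil => simp [conjList]
  | cons φ L ih => simp [conjList, ih]

lemma sat_disjList {v : Val U} {L : List (Form U)} :
    Sat v (disjList L) ↔ ∃ φ ∈ L, Sat v φ := by
  induction L with
  | nil => simp [disjList]
  | cons φ L ih => simp [disjList, ih]

lemma mem_enum [Fintype U] (x : U) : x ∈ enum U := by simp [enum]

lemma sat_bigConj [Fintype U] {v : Val U} {f : U → Form U} :
    Sat v (bigConj f) ↔ ∀ x, Sat v (f x) := by
  simp only [bigConj, sat_conjList, List.mem_map]
  constructor
  · intro h x; exact h _ ⟨x, mem_enum x, rfl⟩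
  · rintro h φ ⟨x, -, rfl⟩; exact h x

lemma sat_bigDisj [Fintype U] {v : Val U} {f : U → Form U} :
    Sat v (bigDisj f) ↔ ∃ x, Sat v (f x) := by
  simp only [bigDisj, sat_disjList, List.mem_map]
  constructor
  · rintro ⟨φ, ⟨x, -, rfl⟩, h⟩; exact ⟨x, h⟩
  · rintro ⟨x, h⟩; exact ⟨f x, ⟨x, mem_enum x, rfl⟩, h⟩

-- unionList
lemma rel_unionList {β : Type} (f : β → Prog U) (L : List β) (hL : L ≠ []) (v w : Val U) :
    Rel (unionList f L) v w ↔ ∃ p ∈ L, Rel (f p) v w := by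
  induction L with
  | nil => exact absurd rfl hL
  | cons p L ih =>
    cases L with
    | nil => simp [unionList]
    | cons q L' =>
      simp only [unionList, rel_choice]
      rw [ih (by simp)]
      constructor
      · rintro (h | ⟨r, hr, h⟩)
        · exact ⟨p, by simp, h⟩
        · exact ⟨r, by simp [hr], h⟩
      · rintro ⟨r, hr, h⟩
        rcases List.mem_cons.mp hr with rfl | hr'
        · exact Or.inl h
        · exact Or.inr ⟨r, hr', h⟩

-- mkTrueSome
lemma rel_mkTrueSome {L : List (PVar U)} {v w : Val U} :
    Rel (mkTrueSome L) v w ↔ v ⊆ w ∧ ∀ p ∈ w, p ∈ v ∨ p ∈ L := by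
  induction L generalizing v with
  | nil =>
    simp only [mkTrueSome, seqList, rel_skip]
    constructor
    · rintro rfl
      exact ⟨subset_rfl, fun p hp => Or.inl hp⟩
    · rintro ⟨h1, h2⟩
      ext p
      constructor
      · intro hp
        rcases h2 p hp with h | h
        · exact h
        · exact absurd h List.not_mem_nil
      · intro hp; exact h1 hp
  | cons p L ih =>
    simp only [mkTrueSome] at ih
    simp only [mkTrueSome, seqList, rel_seq, rel_choice, rel_add, rel_skip]
    constructor
    · rintro ⟨u, hu, hrest⟩
      rw [ih] at hrest
      rcases hrest with ⟨h1, h2⟩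
      rcases hu with rfl | rfl
      · refine ⟨fun q hq => h1 (Or.inl hq), fun q hq => ?_⟩
        rcases h2 q hq with (hq' | hq') | hq'
        · exact Or.inl hq'
        · simp only [Set.mem_singleton_iff] at hq'
          exact Or.inr (by simp [hq'])
        · exact Or.inr (by simp [hq'])
      · refine ⟨h1, fun q hq => ?_⟩
        rcases h2 q hq with hq' | hq'
        · exact Or.inl hq'
        · exact Or.inr (by simp [hq'])
    · rintro ⟨h1, h2⟩
      by_cases hp : p ∈ w
      · refine ⟨v ∪ {p}, Or.inl rfl, ?_⟩
        rw [ih]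
        refine ⟨?_, fun q hq => ?_⟩
        · rintro q (hq | hq)
          · exact h1 hq
          · simp only [Set.mem_singleton_iff] at hq; subst hq; exact hp
        · rcases h2 q hq with hq' | hq'
          · exact Or.inl (Or.inl hq')
          · rcases List.mem_cons.mp hq' with rfl | hq''
            · exact Or.inl (Or.inr rfl)
            · exact Or.inr hq''
      · refine ⟨v, Or.inr rfl, ?_⟩
        rw [ih]
        refine ⟨h1, fun q hq => ?_⟩
        rcases h2 q hq with hq' | hq'
        · exact Or.inl hq'
        · rcases List.mem_cons.mp hq' with rfl | hq''
          · exact absurd hq hp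
          · exact Or.inr hq''

-- mkTrueOne
lemma rel_mkTrueOne {L : List (PVar U)} (hL : L ≠ []) {v w : Val U} :
    Rel (mkTrueOne L) v w ↔ ∃ p ∈ L, p ∉ v ∧ w = v ∪ {p} := by
  rw [mkTrueOne, rel_unionList _ L hL]
  apply exists_congr; intro p
  apply and_congr_right'
  simp only [rel_seq, rel_test, rel_add, sat_neg, sat_var]
  constructor
  · rintro ⟨u, ⟨rfl, h⟩, rfl⟩; exact ⟨h, rfl⟩
  · rintro ⟨h, rfl⟩; exact ⟨v, ⟨rfl, h⟩, rfl⟩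

-- vary
lemma rel_vary {L : List (PVar U)} {v w : Val U} :
    Rel (vary L) v w ↔ ∀ p, p ∉ L → (p ∈ w ↔ p ∈ v) := by
  induction L generalizing v with
  | nil =>
    simp only [vary, seqList, rel_skip]
    constructor
    · rintro rfl p _; rfl
    · intro h; ext p; exact h p List.not_mem_nil
  | cons p L ih =>
    simp only [vary] at ih
    simp only [vary, seqList, rel_seq, rel_choice, rel_add, rel_rem]
    constructor
    · rintro ⟨u, hu, hw⟩
      rw [ih] at hw
      intro q hq
      have hq1 : q ≠ p := fun h => hq (h ▸ (List.mem_cons_self : p ∈ p :: L))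
      have hq2 : q ∉ L := fun h => hq (List.mem_cons_of_mem p h)
      rw [hw q hq2]
      rcases hu with rfl | rfl <;> simp [hq1]
    · intro h
      have key : ∀ u : Val U, (∀ q, q ≠ p → (q ∈ u ↔ q ∈ v)) → (p ∈ u ↔ p ∈ w) →
          Rel (seqList (fun p => (Prog.add p).choice (Prog.rem p)) L) u w := by
        intro u hu hp
        rw [ih]
        intro q hq
        by_cases hqp : q = p
        · subst hqp; exact hp.symm
        · have hq' : q ∉ p :: L := by
            simp only [List.mem_cons, not_or]; exact ⟨hqp, hq⟩
          rw [h q hq', hu q hqp]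
      by_cases hp : p ∈ w
      · refine ⟨v ∪ {p}, Or.inl rfl, key _ (fun q hq => ?_) (by simp [hp])⟩
        simp [hq]
      · refine ⟨v \ {p}, Or.inr rfl, key _ (fun q hq => ?_) (by simp [hp])⟩
        simp [hq]

-- INlist
lemma mem_INlist [Fintype U] {p : PVar U} : p ∈ INlist U ↔ ∃ x, p = PVar.inn x := by
  simp only [INlist, List.mem_map]
  constructor
  · rintro ⟨x, -, rfl⟩; exact ⟨x, rfl⟩
  · rintro ⟨x, rfl⟩; exact ⟨x, mem_enum x, rfl⟩

lemma INlist_ne_nil [Fintype U] [Nonempty U] : (INlist U : List (PVar U)) ≠ [] := by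
  have : (Nonempty.some ‹Nonempty U› : U) ∈ enum U := mem_enum _
  simp only [INlist, ne_eq, List.map_eq_nil_iff]
  intro h; rw [h] at this; simp at this

-- membership in attacked
lemma mem_attacked {A : Set U} {R : Set (U × U)} {E : Set U} {x : U} :
    x ∈ attacked A R E ↔ x ∈ A ∧ ∃ y ∈ E, (y, x) ∈ R := Iff.rfl

lemma mem_Rv {v : Val U} {x y : U} :
    (x, y) ∈ Rv v ↔ PVar.aw x ∈ v ∧ PVar.aw y ∈ v ∧ PVar.att x y ∈ v := Iff.rfl

-- Well / ConFree / Admissible semantics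
lemma sat_Well [Fintype U] {v : Val U} :
    Sat v (Well U) ↔ Ev v ⊆ Av v := by
  simp only [Well, sat_bigConj, sat_impl, sat_var]
  exact ⟨fun h x hx => h x hx, fun h x hx => h hx⟩

lemma sat_ConFree [Fintype U] {v : Val U} :
    Sat v (ConFree U) ↔ IsConflictFree (Av v) (Rv v) (Ev v) := by
  simp only [ConFree, sat_conj, sat_Well, sat_bigConj, sat_neg, sat_var, sat_impl]
  constructor
  · rintro ⟨hw, hc⟩
    refine ⟨hw, Set.eq_empty_iff_forall_notMem.mpr ?_⟩
    rintro x ⟨hx, hxA, y, hy, hyx⟩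
    exact hc y x ⟨hy, hx, hyx.2.2⟩
  · rintro ⟨hw, hc⟩
    refine ⟨hw, fun x y => ?_⟩
    rintro ⟨hx, hy, hxy⟩
    have : y ∈ Ev v ∩ attacked (Av v) (Rv v) (Ev v) :=
      ⟨hy, hw hy, x, hx, hw hx, hw hy, hxy⟩
    rw [hc] at this; exact this

lemma sat_Admissible [Fintype U] {v : Val U} :
    Sat v (AdmissibleF U) ↔ IsAdmissibleExt (Av v) (Rv v) (Ev v) := by
  simp only [AdmissibleF, sat_conj, sat_ConFree, sat_bigConj, sat_bigDisj, sat_impl,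
    sat_conj, sat_var]
  constructor
  · rintro ⟨hcf, hd⟩
    refine ⟨hcf, fun a ha x hxA hxa => ?_⟩
    obtain ⟨z, hz, hzx⟩ := hd a ha x ⟨hxA, hxa.2.2⟩
    exact ⟨hxA, z, hz, hcf.1 hz, hxA, hzx⟩
  · rintro ⟨hcf, hd⟩
    refine ⟨hcf, fun a ha x hx => ?_⟩
    have hxa : (x, a) ∈ Rv v := ⟨hx.1, hcf.1 ha, hx.2⟩
    obtain ⟨-, z, hz, hzx⟩ := hd a ha x hx.1 hxa
    exact ⟨z, hz, hzx.2.2⟩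

-- the step program of PreferredF
lemma rel_pr_step [Fintype U] [Nonempty U] {v w : Val U} :
    Rel (Prog.seq (mkTrueOne (INlist U)) (mkTrueSome (INlist U))) v w ↔
      v ⊆ w ∧ (∃ p ∈ INlist U, p ∉ v ∧ p ∈ w) ∧ ∀ p ∈ w, p ∈ v ∨ p ∈ INlist U := by
  simp only [rel_seq, rel_mkTrueOne (INlist_ne_nil (U := U)), rel_mkTrueSome]
  constructor
  · rintro ⟨u, ⟨p, hpL, hpv, rfl⟩, h1, h2⟩
    refine ⟨fun q hq => h1 (Or.inl hq), ⟨p, hpL, hpv, h1 (Or.inr rfl)⟩, fun q hq => ?_⟩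
    rcases h2 q hq with (hq' | hq') | hq'
    · exact Or.inl hq'
    · simp only [Set.mem_singleton_iff] at hq'; exact Or.inr (hq' ▸ hpL)
    · exact Or.inr hq'
  · rintro ⟨h1, ⟨p, hpL, hpv, hpw⟩, h2⟩
    refine ⟨v ∪ {p}, ⟨p, hpL, hpv, rfl⟩, ?_, fun q hq => ?_⟩
    · rintro q (hq | hq)
      · exact h1 hq
      · simp only [Set.mem_singleton_iff] at hq; exact hq ▸ hpw
    · rcases h2 q hq with hq' | hq'
      · exact Or.inl (Or.inl hq')
      · exact Or.inr hq'

-- Av / Rv / Ev of valuations that differ only on inn variables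
lemma Av_eq_of_inn_diff {v w : Val U} (h : ∀ p, (∃ x, p = PVar.inn x) ∨ (p ∈ w ↔ p ∈ v)) :
    Av w = Av v := by
  ext x
  rcases h (PVar.aw x) with ⟨y, hy⟩ | h'
  · exact absurd hy (by simp)
  · exact h'

lemma Rv_eq_of_inn_diff {v w : Val U} (h : ∀ p, (∃ x, p = PVar.inn x) ∨ (p ∈ w ↔ p ∈ v)) :
    Rv w = Rv v := by
  have hA := Av_eq_of_inn_diff h
  ext ⟨x, y⟩
  rcases h (PVar.att x y) with ⟨z, hz⟩ | h'
  · exact absurd hz (by simp)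
  · simp only [mem_Rv]
    have hx := (Set.ext_iff.mp hA x)
    have hy := (Set.ext_iff.mp hA y)
    simp only [Av, Set.mem_setOf_eq] at hx hy
    rw [hx, hy, h']

lemma sat_Preferred [Fintype U] [Nonempty U] {v : Val U} :
    Sat v (PreferredF U) ↔ IsAdmissibleExt (Av v) (Rv v) (Ev v) ∧
      ∀ E, Ev v ⊂ E → ¬ IsAdmissibleExt (Av v) (Rv v) E := by
  simp only [PreferredF, sat_conj, sat_Admissible, sat_box, sat_neg, rel_pr_step]
  apply and_congr_right'
  constructor
  · intro h E hE
    obtain ⟨hsub, hne⟩ := hE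
    obtain ⟨x, hxE, hxv⟩ := Set.not_subset.mp hne
    set w : Val U := v ∪ (PVar.inn '' E) with hw
    have hdiff : ∀ p : PVar U, (∃ y, p = PVar.inn y) ∨ (p ∈ w ↔ p ∈ v) := by
      intro p
      by_cases hp : ∃ y, p = PVar.inn y
      · exact Or.inl hp
      · refine Or.inr ⟨?_, fun h => Or.inl h⟩
        rintro (h | h)
        · exact h
        · obtain ⟨y, -, rfl⟩ := h; exact absurd ⟨y, rfl⟩ hp
    have hEw : Ev w = E := by
      ext y
      simp only [Ev, Set.mem_setOf_eq, hw, Set.mem_union, Set.mem_image]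
      constructor
      · rintro (hy | ⟨z, hz, hzy⟩)
        · exact hsub hy
        · cases hzy; exact hz
      · intro hy; exact Or.inr ⟨y, hy, rfl⟩
    have := h w (by
      refine ⟨Set.subset_union_left, ⟨PVar.inn x, mem_INlist.mpr ⟨x, rfl⟩, hxv,
        Or.inr ⟨x, hxE, rfl⟩⟩, ?_⟩
      rintro p (hp | hp)
      · exact Or.inl hp
      · obtain ⟨y, -, rfl⟩ := hp; exact Or.inr (mem_INlist.mpr ⟨y, rfl⟩))
    intro hadm
    apply this
    rw [Av_eq_of_inn_diff hdiff, Rv_eq_of_inn_diff hdiff, hEw]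
    exact hadm
  · intro h w hrel
    obtain ⟨hsub, ⟨p, hpL, hpv, hpw⟩, hall⟩ := hrel
    have hdiff : ∀ q : PVar U, (∃ y, q = PVar.inn y) ∨ (q ∈ w ↔ q ∈ v) := by
      intro q
      by_cases hq : ∃ y, q = PVar.inn y
      · exact Or.inl hq
      · refine Or.inr ⟨fun hw' => ?_, fun h' => hsub h'⟩
        rcases hall q hw' with h' | h'
        · exact h'
        · exact absurd (mem_INlist.mp h') hq
    have hssub : Ev v ⊂ Ev w := by
      obtain ⟨x, rfl⟩ := mem_INlist.mp hpL
      refine ⟨fun y hy => hsub hy, fun hc => hpv (hc hpw)⟩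
    have := h (Ev w) hssub
    rw [← Av_eq_of_inn_diff hdiff, ← Rv_eq_of_inn_diff hdiff] at this
    exact this

-- Argumentation theory lemmas
lemma attacked_mono {A : Set U} {R : Set (U × U)} {E E' : Set U} (h : E ⊆ E') :
    attacked A R E ⊆ attacked A R E' := by
  rintro x ⟨hx, y, hy, hyx⟩
  exact ⟨hx, y, h hy, hyx⟩

lemma defends_mono {A : Set U} {R : Set (U × U)} {E E' : Set U} (h : E ⊆ E') {a : U}
    (hd : Defends A R E a) : Defends A R E' a :=
  fun x hx hxa => attacked_mono h (hd x hx hxa)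

lemma complete_admissible {A : Set U} {R : Set (U × U)} {E : Set U}
    (h : IsCompleteExt A R E) : IsAdmissibleExt A R E := by
  refine ⟨h.1, fun a ha => ?_⟩
  have := h.2 ▸ ha
  exact this.2

lemma cf_not_attacked {A : Set U} {R : Set (U × U)} {E : Set U}
    (h : IsConflictFree A R E) {x : U} (hx : x ∈ E) : x ∉ attacked A R E := by
  intro hx'
  have : x ∈ E ∩ attacked A R E := ⟨hx, hx'⟩
  rw [h.2] at this; exact this

lemma fundamental {A : Set U} {R : Set (U × U)} {E : Set U} {a : U}
    (hE : IsAdmissibleExt A R E) (ha : a ∈ A) (hd : Defends A R E a) :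
    IsAdmissibleExt A R (insert a E) := by
  obtain ⟨⟨hsub, hcf⟩, hdef⟩ := hE
  have star : ∀ y ∈ E, (y, a) ∉ R := by
    intro y hy hya
    have : y ∈ attacked A R E := hd y (hsub hy) hya
    exact cf_not_attacked ⟨hsub, hcf⟩ hy this
  have star2 : a ∉ attacked A R E := by
    rintro ⟨-, y, hy, hya⟩
    exact star y hy hya
  constructor
  constructor
  · exact Set.insert_subset ha hsub
  · rw [Set.eq_empty_iff_forall_notMem]
    rintro z ⟨hz, hzA, y, hy, hyz⟩
    rcases Set.mem_insert_iff.mp hy with rfl | hyE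
    · -- attacker is a
      rcases Set.mem_insert_iff.mp hz with rfl | hzE
      · -- a attacks a
        have : z ∈ attacked A R E := hd z ha hyz
        exact star2 this
      · -- a attacks z ∈ E
        have : y ∈ attacked A R E := hdef z hzE y ha hyz
        exact star2 this
    · rcases Set.mem_insert_iff.mp hz with rfl | hzE
      · exact star y hyE hyz
      · exact cf_not_attacked ⟨hsub, hcf⟩ hzE ⟨hzA, y, hyE, hyz⟩
  · intro b hb
    rcases Set.mem_insert_iff.mp hb with rfl | hbE
    · exact defends_mono (Set.subset_insert _ _) hd
    · exact defends_mono (Set.subset_insert _ _) (hdef b hbE)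

lemma max_adm_complete {A : Set U} {R : Set (U × U)} {E : Set U}
    (hE : IsAdmissibleExt A R E)
    (hmax : ∀ E', IsAdmissibleExt A R E' → E ⊆ E' → E' = E) :
    IsCompleteExt A R E := by
  refine ⟨hE.1, ?_⟩
  ext a
  simp only [Set.mem_setOf_eq]
  constructor
  · intro ha; exact ⟨hE.1.1 ha, hE.2 a ha⟩
  · rintro ⟨haA, hd⟩
    have := fundamental hE haA hd
    have heq := hmax _ this (Set.subset_insert _ _)
    rw [← heq]; exact Set.mem_insert a E

lemma exists_max_adm [Fintype U] {A : Set U} {R : Set (U × U)} {E : Set U}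
    (hE : IsAdmissibleExt A R E) :
    ∃ E', IsAdmissibleExt A R E' ∧ E ⊆ E' ∧
      ∀ E'', IsAdmissibleExt A R E'' → E' ⊆ E'' → E'' = E' := by
  obtain ⟨E', hE', hmax⟩ := Set.Finite.exists_maximalFor id
    {F | IsAdmissibleExt A R F ∧ E ⊆ F} (Set.toFinite _) ⟨E, hE, subset_rfl⟩
  refine ⟨E', hE'.1, hE'.2, fun E'' h'' hsub => ?_⟩
  exact Set.Subset.antisymm (hmax ⟨h'', hE'.2.trans hsub⟩ hsub) hsub

lemma pref_iff_max_adm [Fintype U] {A : Set U} {R : Set (U × U)} {E : Set U} :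
    IsPreferredExt A R E ↔ IsAdmissibleExt A R E ∧
      ∀ E', IsAdmissibleExt A R E' → E ⊆ E' → E' = E := by
  constructor
  · rintro ⟨hc, hmax⟩
    refine ⟨complete_admissible hc, fun E' hE' hsub => ?_⟩
    obtain ⟨E'', hE'', hsub', hmax''⟩ := exists_max_adm hE'
    have hcomp : IsCompleteExt A R E'' := max_adm_complete hE'' hmax''
    have := hmax E'' hcomp (hsub.trans hsub')
    subst this
    exact Set.Subset.antisymm hsub' hsub  -- E' ⊆ E'' = E and E ⊆ E'
  · rintro ⟨hadm, hmax⟩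
    refine ⟨max_adm_complete hadm hmax, fun E' hE' hsub => ?_⟩
    exact hmax E' (complete_admissible hE') hsub

lemma part1 [Fintype U] [Nonempty U] (v : Val U) :
    Sat v (PreferredF U) ↔ IsPreferredExt (Av v) (Rv v) (Ev v) := by
  rw [sat_Preferred, pref_iff_max_adm]
  apply and_congr_right'
  constructor
  · intro h E' hE' hsub
    by_contra hne
    exact h E' ⟨hsub, fun hc => hne (Set.Subset.antisymm hc hsub)⟩ hE'
  · intro h E hssub hadm
    exact hssub.2 ((h E hadm hssub.1) ▸ subset_rfl)

-- valOf facts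
@[simp] lemma aw_mem_valOf {A : Set U} {R : Set (U × U)} {x : U} :
    PVar.aw x ∈ valOf A R ↔ x ∈ A := by
  simp [valOf]

@[simp] lemma att_mem_valOf {A : Set U} {R : Set (U × U)} {x y : U} :
    PVar.att x y ∈ valOf A R ↔ (x, y) ∈ R := by
  simp only [valOf, Set.mem_union, Set.mem_image]
  constructor
  · rintro (⟨z, -, hz⟩ | ⟨⟨a, b⟩, hq, hz⟩)
    · exact absurd hz (by simp)
    · simp only [PVar.att.injEq] at hz
      obtain ⟨rfl, rfl⟩ := hz; exact hq
  · intro h; exact Or.inr ⟨(x, y), h, rfl⟩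

@[simp] lemma inn_not_mem_valOf {A : Set U} {R : Set (U × U)} {x : U} :
    PVar.inn x ∉ valOf A R := by
  simp only [valOf, Set.mem_union, Set.mem_image]
  rintro (⟨z, -, hz⟩ | ⟨q, -, hz⟩) <;> simp at hz

end ThmAux
end DLPA

open DLPA in
/-- Theorem 1 for the preferred semantics. -/
theorem thm1_preferred
    (U : Type) [Fintype U] [Nonempty U] :
    (∀ v : Val U, Sat v (PreferredF U) ↔ IsPreferredExt (Av v) (Rv v) (Ev v)) ∧
    (∀ (A : Set U) (R : Set (U × U)), R ⊆ A ×ˢ A →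
      {E | IsPreferredExt A R E} =
        {E | ∃ v : Val U, Rel (makeExt U (PreferredF U)) (valOf A R) v ∧ E = Ev v}) := by
  constructor
  · exact fun v => part1 v
  · intro A R hR
    have hA : Av (valOf A R : Val U) = A := by
      ext x; simp [Av]
    have hRv : Rv (valOf A R : Val U) = R := by
      ext ⟨x, y⟩
      simp only [mem_Rv, aw_mem_valOf, att_mem_valOf]
      constructor
      · rintro ⟨-, -, h⟩; exact h
      · intro h
        obtain ⟨hx, hy⟩ := Set.mem_prod.mp (hR h)
        exact ⟨hx, hy, h⟩
    ext E
    simp only [Set.mem_setOf_eq, makeExt, rel_seq, rel_test]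
    constructor
    · intro hE
      set v : Val U := valOf A R ∪ (PVar.inn '' E) with hv
      have hdiff : ∀ p : PVar U, (∃ y, p = PVar.inn y) ∨ (p ∈ v ↔ p ∈ valOf A R) := by
        intro p
        by_cases hp : ∃ y, p = PVar.inn y
        · exact Or.inl hp
        · refine Or.inr ⟨?_, fun h => Or.inl h⟩
          intro h
          rcases (Set.mem_union _ _ _).mp h with h' | h'
          · exact h'
          · obtain ⟨y, -, rfl⟩ := h'
            exact absurd ⟨y, rfl⟩ hp
      have hAv : Av v = A := (Av_eq_of_inn_diff hdiff).trans hA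
      have hRv' : Rv v = R := (Rv_eq_of_inn_diff hdiff).trans hRv
      have hEv : Ev v = E := by
        ext x
        simp only [Ev, Set.mem_setOf_eq, hv, Set.mem_union, Set.mem_image]
        constructor
        · rintro (h | ⟨y, hy, hxy⟩)
          · exact absurd h inn_not_mem_valOf
          · cases hxy; exact hy
        · intro hx; exact Or.inr ⟨x, hx, rfl⟩
      refine ⟨v, ⟨v, ?_, rfl, ?_⟩, hEv.symm⟩
      · rw [rel_vary]
        intro p hp
        rcases hdiff p with ⟨y, rfl⟩ | h
        · exact absurd (mem_INlist.mpr ⟨y, rfl⟩) hp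
        · exact h
      · rw [part1, hAv, hRv', hEv]
        exact hE
    · rintro ⟨v, ⟨u, hu, huv, hsat⟩, rfl⟩
      rw [huv]
      rw [rel_vary] at hu
      have hdiff : ∀ p : PVar U, (∃ y, p = PVar.inn y) ∨ (p ∈ u ↔ p ∈ valOf A R) := by
        intro p
        by_cases hp : ∃ y, p = PVar.inn y
        · exact Or.inl hp
        · exact Or.inr (hu p (fun h => hp (mem_INlist.mp h)))
      rw [part1, Av_eq_of_inn_diff hdiff, Rv_eq_of_inn_diff hdiff, hA, hRv] at hsat
      exact hsat
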